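/- Every locally compact Hausdorff topology on the semigroup I∞↗(ℕ) with respect to which I∞↗(ℕ) is a topological inverse semigroup (multiplication is jointly continuous and the inversion map α ↦ α⁻¹ is continuous) is the discrete topology. -/

import Mathlib

open Set

/-- Cofinite monotone partial bijections of `ℕ`. -/
def IsCMPB (e : PartialEquiv ℕ ℕ) : Prop :=
  e.sourceᶜ.Finite ∧ e.targetᶜ.Finite ∧
    ∀ ⦃m n : ℕ⦄, m ∈ e.source → n ∈ e.source → m < n → e m < e n

lemma IsCMPB.symm {e : PartialEquiv ℕ ℕ} (he : IsCMPB e) : IsCMPB e.symm := by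
  obtain ⟨h1, h2, h3⟩ := he
  refine ⟨by simpa using h2, by simpa using h1, ?_⟩
  intro m n hm hn hmn
  have hm' : e.symm m ∈ e.source := e.map_target (by simpa using hm)
  have hn' : e.symm n ∈ e.source := e.map_target (by simpa using hn)
  have hEm : e (e.symm m) = m := e.right_inv hm
  have hEn : e (e.symm n) = n := e.right_inv hn
  rcases lt_trichotomy (e.symm m) (e.symm n) with h | h | h
  · exact h
  · exfalso
    have : m = n := by rw [← hEm, ← hEn, h]
    omega
  · exfalso
    have := h3 hn' hm' h
    rw [hEm, hEn] at this
    omega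

private lemma trans_source_compl_finite {e f : PartialEquiv ℕ ℕ}
    (he : e.sourceᶜ.Finite) (hf : f.sourceᶜ.Finite) : ((e.trans f).source)ᶜ.Finite := by
  rw [PartialEquiv.trans_source]
  have hT : (e.source ∩ e ⁻¹' f.sourceᶜ).Finite := by
    apply Set.Finite.of_finite_image ?_ (e.injOn.mono inter_subset_left)
    apply hf.subset
    rintro _ ⟨x, ⟨_, hx2⟩, rfl⟩
    exact hx2
  apply (he.union hT).subset
  intro x hx
  simp only [mem_compl_iff, mem_inter_iff, not_and_or] at hx
  by_cases h : x ∈ e.source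
  · rcases hx with h' | h'
    · exact absurd h h'
    · exact Or.inr ⟨h, h'⟩
  · exact Or.inl h

lemma IsCMPB.trans {e f : PartialEquiv ℕ ℕ} (he : IsCMPB e) (hf : IsCMPB f) :
    IsCMPB (e.trans f) := by
  refine ⟨trans_source_compl_finite he.1 hf.1, ?_, ?_⟩
  · have h : (((e.trans f).symm).source)ᶜ.Finite := by
      rw [PartialEquiv.trans_symm_eq_symm_trans_symm]
      exact trans_source_compl_finite (by simpa using hf.2.1) (by simpa using he.2.1)
    simpa using h
  · intro m n hm hn hmn
    rw [PartialEquiv.trans_source] at hm hn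
    show f (e m) < f (e n)
    exact hf.2.2 hm.2 hn.2 (he.2.2 hm.1 hn.1 hmn)

lemma isCMPB_congr {e e' : PartialEquiv ℕ ℕ} (h : e ≈ e') : IsCMPB e ↔ IsCMPB e' := by
  constructor <;> intro ⟨h1, h2, h3⟩
  · refine ⟨(PartialEquiv.EqOnSource.source_eq h) ▸ h1, (PartialEquiv.EqOnSource.target_eq h) ▸ h2, ?_⟩
    intro m n hm hn hmn
    rw [← (PartialEquiv.EqOnSource.source_eq h)] at hm hn
    rw [← (PartialEquiv.EqOnSource.eqOn h) hm, ← (PartialEquiv.EqOnSource.eqOn h) hn]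
    exact h3 hm hn hmn
  · refine ⟨(PartialEquiv.EqOnSource.source_eq h) ▸ h1, (PartialEquiv.EqOnSource.target_eq h) ▸ h2, ?_⟩
    intro m n hm hn hmn
    rw [(PartialEquiv.EqOnSource.eqOn h) hm, (PartialEquiv.EqOnSource.eqOn h) hn]
    exact h3 ((PartialEquiv.EqOnSource.source_eq h) ▸ hm) ((PartialEquiv.EqOnSource.source_eq h) ▸ hn) hmn

/-- The type of partial bijections of `ℕ` up to equality on the source. -/
abbrev PEQ : Type := Quotient (PartialEquiv.eqOnSourceSetoid (α := ℕ) (β := ℕ))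

instance : Mul PEQ :=
  ⟨Quotient.map₂ PartialEquiv.trans fun _ _ h _ _ h' => PartialEquiv.EqOnSource.trans' h h'⟩

lemma PEQ.mk_mul (e f : PartialEquiv ℕ ℕ) : (⟦e⟧ * ⟦f⟧ : PEQ) = ⟦e.trans f⟧ := rfl

instance : Semigroup PEQ where
  mul_assoc a b c := by
    induction a using Quotient.inductionOn with | h a =>
    induction b using Quotient.inductionOn with | h b =>
    induction c using Quotient.inductionOn with | h c =>
    simp only [PEQ.mk_mul, PartialEquiv.trans_assoc]

/-- The property of being a cofinite monotone partial bijection, on `PEQ`. -/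
def PEQ.IsGood : PEQ → Prop :=
  Quotient.lift IsCMPB fun _ _ h => propext (isCMPB_congr h)

lemma PEQ.IsGood.mul {a b : PEQ} (ha : a.IsGood) (hb : b.IsGood) : (a * b).IsGood := by
  induction a using Quotient.inductionOn with | h a =>
  induction b using Quotient.inductionOn with | h b =>
  exact IsCMPB.trans ha hb

/-- The semigroup `I∞↗(ℕ)` of cofinite monotone partial bijections of `ℕ`
(partial bijections being identified when they have the same source and coincide there). -/
def Imon : Type := {q : PEQ // q.IsGood}

instance : Mul Imon := ⟨fun a b => ⟨a.1 * b.1, a.2.mul b.2⟩⟩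

instance : Semigroup Imon where
  mul_assoc a b c := Subtype.ext (mul_assoc a.1 b.1 c.1)

/-- The underlying symmetrization (inverse partial bijection), on `PEQ`. -/
def PEQ.symm : PEQ → PEQ := Quotient.map PartialEquiv.symm fun _ _ h => PartialEquiv.EqOnSource.symm' h

lemma PEQ.IsGood.symm {a : PEQ} (ha : a.IsGood) : a.symm.IsGood := by
  induction a using Quotient.inductionOn with | h a =>
  exact IsCMPB.symm ha

/-- The inverse in the inverse semigroup `I∞↗(ℕ)`. -/
instance : Inv Imon := ⟨fun a => ⟨a.1.symm, a.2.symm⟩⟩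

/-- The source (domain) of an element of `PEQ`. -/
def PEQ.source : PEQ → Set ℕ :=
  Quotient.lift (fun e => e.source) fun _ _ h => (PartialEquiv.EqOnSource.source_eq h)

/-- The target (range) of an element of `PEQ`. -/
def PEQ.target : PEQ → Set ℕ :=
  Quotient.lift (fun e => e.target) fun _ _ h => (PartialEquiv.EqOnSource.target_eq h)

/-- The source (domain) of a cofinite monotone partial bijection of `ℕ`. -/
def Imon.source (a : Imon) : Set ℕ := a.1.source

/-- The target (range) of a cofinite monotone partial bijection of `ℕ`. -/
def Imon.target (a : Imon) : Set ℕ := a.1.target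

/-- The graph of an element of `PEQ`: pairs `(x, y)` with `x` in the source mapped to `y`. -/
def PEQ.graph : PEQ → Set (ℕ × ℕ) :=
  Quotient.lift (fun e => {p : ℕ × ℕ | p.1 ∈ e.source ∧ e p.1 = p.2}) fun e e' h => by
    ext p
    simp only [mem_setOf_eq]
    constructor
    · rintro ⟨h1, h2⟩
      exact ⟨(PartialEquiv.EqOnSource.source_eq h) ▸ h1, by rw [← (PartialEquiv.EqOnSource.eqOn h) h1]; exact h2⟩
    · rintro ⟨h1, h2⟩
      refine ⟨(PartialEquiv.EqOnSource.source_eq h) ▸ h1, ?_⟩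
      rw [(PartialEquiv.EqOnSource.eqOn h) ((PartialEquiv.EqOnSource.source_eq h) ▸ h1 : p.1 ∈ e.source)]
      exact h2

/-- The graph of a cofinite monotone partial bijection of `ℕ`. -/
def Imon.graph (a : Imon) : Set (ℕ × ℕ) := a.1.graph

/-- The natural partial order on idempotents: `ε ≤ ι` iff `ε * ι = ι * ε = ε`. -/
def idemLE (ε ι : Imon) : Prop := ε * ι = ε ∧ ι * ε = ε

/-- The everywhere-defined partial bijection `n ↦ n + 1`. -/
def alphaPE : PartialEquiv ℕ ℕ where
  toFun n := n + 1
  invFun n := n - 1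
  source := Set.univ
  target := {n : ℕ | 1 ≤ n}
  map_source' n _ := Nat.le_add_left 1 n
  map_target' _ _ := trivial
  left_inv' n _ := by show n + 1 - 1 = n; omega
  right_inv' n hn := by
    simp only [Set.mem_setOf_eq] at hn
    show n - 1 + 1 = n
    omega

lemma alphaPE_good : IsCMPB alphaPE := by
  refine ⟨by simp [alphaPE], ?_, ?_⟩
  · apply (Set.finite_singleton 0).subset
    intro n hn
    simp only [alphaPE, mem_compl_iff, mem_setOf_eq, not_le] at hn
    simp only [mem_singleton_iff]
    omega
  · intro m n _ _ h
    show m + 1 < n + 1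
    omega

/-- The generator `α : n ↦ n + 1` of the bicyclic subsemigroup. -/
def aGen : Imon := ⟨⟦alphaPE⟧, alphaPE_good⟩

/-- The generator `β : n ↦ n - 1` (with source `{n | 1 ≤ n}`) of the bicyclic subsemigroup. -/
def bGen : Imon := aGen⁻¹

/-- The bicyclic subsemigroup `C_ℕ(α, β)` of `I∞↗(ℕ)`, generated by `α` and `β`. -/
def Cbic : Subsemigroup Imon := Subsemigroup.closure {aGen, bGen}


section Aux

open scoped Classical

/-- eventually-fixed order iso between two cofinite sets -/
noncomputable def oiFun (S T : Set ℕ) (n : ℕ) : ℕ :=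
  Nat.nth (· ∈ T) (Nat.count (· ∈ S) n)

lemma infinite_of_compl_finite {S : Set ℕ} (hS : Sᶜ.Finite) : {n | n ∈ S}.Infinite := by
  have := hS.infinite_compl
  rwa [compl_compl] at this

noncomputable def oi (S T : Set ℕ) (hS : Sᶜ.Finite) (hT : Tᶜ.Finite) : PartialEquiv ℕ ℕ where
  toFun := oiFun S T
  invFun := oiFun T S
  source := S
  target := T
  map_source' n _ := Nat.nth_mem_of_infinite (infinite_of_compl_finite hT) _
  map_target' n _ := Nat.nth_mem_of_infinite (infinite_of_compl_finite hS) _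
  left_inv' n hn := by
    show oiFun T S (oiFun S T n) = n
    unfold oiFun
    rw [Nat.count_nth_of_infinite (infinite_of_compl_finite hT), Nat.nth_count hn]
  right_inv' n hn := by
    show oiFun S T (oiFun T S n) = n
    unfold oiFun
    rw [Nat.count_nth_of_infinite (infinite_of_compl_finite hS), Nat.nth_count hn]

lemma oi_isCMPB {S T : Set ℕ} (hS : Sᶜ.Finite) (hT : Tᶜ.Finite) : IsCMPB (oi S T hS hT) := by
  refine ⟨hS, hT, ?_⟩
  intro m n hm _ hmn
  show oiFun S T m < oiFun S T n
  exact (Nat.nth_lt_nth (infinite_of_compl_finite hT)).mpr (Nat.count_strict_mono hm hmn)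

/-- key uniqueness step -/
lemma cmpb_not_lt {e e' : PartialEquiv ℕ ℕ} (he' : IsCMPB e')
    (hs : e.source = e'.source) (ht : e.target = e'.target) {n : ℕ}
    (IH : ∀ m, m < n → m ∈ e.source → e m = e' m) (hn : n ∈ e.source) : ¬ e n < e' n := by
  intro hlt
  have h1 : e n ∈ e'.target := ht ▸ e.map_source hn
  set m := e'.symm (e n) with hmdef
  have hm1 : m ∈ e'.source := e'.map_target h1
  have hm1' : m ∈ e.source := by rw [hs]; exact hm1
  have hm2 : e' m = e n := e'.right_inv h1
  have hmn : m < n := by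
    by_contra h
    push_neg at h
    rcases eq_or_lt_of_le h with h' | h'
    · rw [← h'] at hm2; omega
    · have := he'.2.2 (hs ▸ hn) hm1 h'
      omega
  have heq : e m = e n := by rw [IH m hmn hm1', hm2]
  have := e.injOn hm1' hn heq
  omega

lemma cmpb_eqOn {e e' : PartialEquiv ℕ ℕ} (he : IsCMPB e) (he' : IsCMPB e')
    (hs : e.source = e'.source) (ht : e.target = e'.target) :
    ∀ n ∈ e.source, e n = e' n := by
  intro n
  induction n using Nat.strong_induction_on with
  | _ n IH =>
    intro hn
    have h1 := cmpb_not_lt he' hs ht (fun m hm hms => IH m hm hms) hn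
    have h2 := cmpb_not_lt he hs.symm ht.symm
      (fun m hm hms => (IH m hm (by rw [hs]; exact hms)).symm) (by rw [← hs]; exact hn)
    omega

lemma cmpb_eqOnSource {e e' : PartialEquiv ℕ ℕ} (he : IsCMPB e) (he' : IsCMPB e')
    (hs : e.source = e'.source) (ht : e.target = e'.target) : e ≈ e' :=
  ⟨hs, fun n hn => cmpb_eqOn he he' hs ht n hn⟩

lemma Imon.ext_of_source_target {w w' : Imon} (hs : w.source = w'.source)
    (ht : w.target = w'.target) : w = w' := by
  obtain ⟨q, hq⟩ := w
  obtain ⟨q', hq'⟩ := w'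
  induction q using Quotient.inductionOn with | h e => ?_
  induction q' using Quotient.inductionOn with | h e' => ?_
  exact Subtype.ext (Quotient.sound (cmpb_eqOnSource hq hq' hs ht))

lemma finite_cofinite_above {S T : Set ℕ} (hS : Sᶜ.Finite) (hT : Tᶜ.Finite) :
    {w : Imon | S ⊆ w.source ∧ T ⊆ w.target}.Finite := by
  have h1 : {A : Set ℕ | Aᶜ ⊆ Sᶜ}.Finite := by
    apply (hS.finite_subsets.image compl).subset
    intro A hA
    exact ⟨Aᶜ, hA, compl_compl A⟩
  have h2 : {A : Set ℕ | Aᶜ ⊆ Tᶜ}.Finite := by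
    apply (hT.finite_subsets.image compl).subset
    intro A hA
    exact ⟨Aᶜ, hA, compl_compl A⟩
  apply Set.Finite.of_finite_image (f := fun w : Imon => (w.source, w.target))
  · apply (h1.prod h2).subset
    rintro _ ⟨w, ⟨hw1, hw2⟩, rfl⟩
    exact ⟨compl_subset_compl.mpr hw1, compl_subset_compl.mpr hw2⟩
  · intro w _ w' _ h
    exact Imon.ext_of_source_target (congrArg Prod.fst h) (congrArg Prod.snd h)

lemma Imon.compl_source_finite (w : Imon) : (w.source)ᶜ.Finite ∧ (w.target)ᶜ.Finite := by
  obtain ⟨q, hq⟩ := w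
  induction q using Quotient.inductionOn with | h e => ?_
  exact ⟨hq.1, hq.2.1⟩

noncomputable instance : Countable Imon := by
  have hinj : Function.Injective
      (fun w : Imon => ((w.compl_source_finite.1.toFinset, w.compl_source_finite.2.toFinset) :
        Finset ℕ × Finset ℕ)) := by
    intro w w' h
    simp only [Prod.mk.injEq] at h
    apply Imon.ext_of_source_target
    · have : (w.source)ᶜ = (w'.source)ᶜ := by
        rw [← w.compl_source_finite.1.coe_toFinset, ← w'.compl_source_finite.1.coe_toFinset, h.1]
      exact compl_injective this
    · have : (w.target)ᶜ = (w'.target)ᶜ := by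
        rw [← w.compl_source_finite.2.coe_toFinset, ← w'.compl_source_finite.2.coe_toFinset, h.2]
      exact compl_injective this
  exact hinj.countable

lemma source_trans_eq {u v : PartialEquiv ℕ ℕ} (h : ∀ n ∈ u.source, u n ∈ v.source) :
    (u.trans v).source = u.source := by
  rw [PartialEquiv.trans_source]
  exact Set.inter_eq_left.mpr fun n hn => h n hn

lemma target_trans_eq {u v : PartialEquiv ℕ ℕ} (h : ∀ n ∈ v.target, v.symm n ∈ u.target) :
    (u.trans v).target = v.target := by
  rw [PartialEquiv.trans_target]
  exact Set.inter_eq_left.mpr fun n hn => h n hn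

end Aux


/-- every locally compact Hausdorff topology making `I∞↗(ℕ)` a topological
inverse semigroup is discrete. -/
theorem Imon_locally_compact_inverse_discrete
    [TopologicalSpace Imon] [T2Space Imon] [LocallyCompactSpace Imon]
    [ContinuousMul Imon] (hinv : Continuous fun α : Imon => α⁻¹) :
    DiscreteTopology Imon := by
  haveI : Nonempty Imon := ⟨aGen⟩
  obtain ⟨x, hx⟩ := nonempty_interior_of_iUnion_of_closed
    (f := fun i : Imon => {i}) (fun i => isClosed_singleton)
    (Set.iUnion_of_singleton Imon)
  have hxo : IsOpen ({x} : Set Imon) := by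
    obtain ⟨z, hz⟩ := hx
    have hzx : z = x := Set.mem_singleton_iff.mp (interior_subset hz)
    have hint : interior ({x} : Set Imon) = {x} :=
      Set.Subset.antisymm interior_subset
        (Set.singleton_subset_iff.mpr (hzx ▸ hz))
    rw [← hint]; exact isOpen_interior
  rw [discreteTopology_iff_isOpen_singleton]
  intro y
  obtain ⟨qx, hqx⟩ := x
  obtain ⟨qy, hqy⟩ := y
  induction qx using Quotient.inductionOn with | h ex => ?_
  induction qy using Quotient.inductionOn with | h ey => ?_
  set a : PartialEquiv ℕ ℕ := oi ex.source ey.source hqx.1 hqy.1 with ha_def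
  set b : PartialEquiv ℕ ℕ := oi ey.target ex.target hqy.2.1 hqx.2.1 with hb_def
  have ha : IsCMPB a := oi_isCMPB _ _
  have hb : IsCMPB b := oi_isCMPB _ _
  set A : Imon := ⟨⟦a⟧, ha⟩ with hA_def
  set B : Imon := ⟨⟦b⟧, hb⟩ with hB_def
  set f : Imon → Imon := fun w => A * w * B with hf_def
  have hf : Continuous f := (continuous_const.mul continuous_id).mul continuous_const
  -- f maps y to x
  have hsrc1 : (a.trans ey).source = ex.source :=
    source_trans_eq (fun n hn => a.map_source hn)
  have hsrc : ((a.trans ey).trans b).source = ex.source := by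
    rw [source_trans_eq ?hs1, hsrc1]
    case hs1 =>
      intro n hn
      rw [PartialEquiv.trans_source] at hn
      exact ey.map_source hn.2
  have htgt1 : (a.trans ey).target = ey.target :=
    target_trans_eq (fun n hn => ey.map_target hn)
  have htgt : ((a.trans ey).trans b).target = ex.target := by
    rw [target_trans_eq ?ht1]
    · rfl
    case ht1 =>
      intro n hn
      rw [htgt1]
      exact b.map_target hn
  have hc : IsCMPB ((a.trans ey).trans b) := (ha.trans hqy).trans hb
  have hfy : f ⟨⟦ey⟧, hqy⟩ = ⟨⟦ex⟧, hqx⟩ :=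
    Subtype.ext (Quotient.sound (cmpb_eqOnSource hc hqx hsrc htgt))
  -- the preimage of {x} is contained in a finite set
  have hsub : f ⁻¹' {(⟨⟦ex⟧, hqx⟩ : Imon)} ⊆
      {w : Imon | ey.source ⊆ w.source ∧ ey.target ⊆ w.target} := by
    rintro ⟨qz, hqz⟩ hz
    induction qz using Quotient.inductionOn with | h z => ?_
    replace hz : f ⟨⟦z⟧, hqz⟩ = ⟨⟦ex⟧, hqx⟩ := hz
    have hz' : (a.trans z).trans b ≈ ex := Quotient.exact (congrArg Subtype.val hz)
    have hsz : ((a.trans z).trans b).source = ex.source :=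
      PartialEquiv.EqOnSource.source_eq hz'
    have htz : ((a.trans z).trans b).target = ex.target :=
      PartialEquiv.EqOnSource.target_eq hz'
    constructor
    · intro m hm
      have hn : a.symm m ∈ a.source := a.map_target hm
      have h3 : a.symm m ∈ ((a.trans z).trans b).source := by rw [hsz]; exact hn
      rw [PartialEquiv.trans_source, PartialEquiv.trans_source] at h3
      have h4 : a (a.symm m) ∈ z.source := h3.1.2
      rwa [a.right_inv hm] at h4
    · intro t ht
      have h4 : b t ∈ ((a.trans z).trans b).target := by
        rw [htz]
        exact b.map_source ht
      rw [PartialEquiv.trans_target] at h4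
      have h5 : b.symm (b t) ∈ (a.trans z).target := h4.2
      rw [b.left_inv ht] at h5
      rw [PartialEquiv.trans_target] at h5
      exact h5.1
  have hEfin : (f ⁻¹' {(⟨⟦ex⟧, hqx⟩ : Imon)}).Finite :=
    (finite_cofinite_above hqy.1 hqy.2.1).subset hsub
  have hEopen : IsOpen (f ⁻¹' {(⟨⟦ex⟧, hqx⟩ : Imon)}) := hxo.preimage hf
  have hyE : (⟨⟦ey⟧, hqy⟩ : Imon) ∈ f ⁻¹' {(⟨⟦ex⟧, hqx⟩ : Imon)} := by
    show f ⟨⟦ey⟧, hqy⟩ = ⟨⟦ex⟧, hqx⟩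
    exact hfy
  have hsing : ({(⟨⟦ey⟧, hqy⟩ : Imon)} : Set Imon) =
      f ⁻¹' {(⟨⟦ex⟧, hqx⟩ : Imon)} \ (f ⁻¹' {(⟨⟦ex⟧, hqx⟩ : Imon)} \ {(⟨⟦ey⟧, hqy⟩ : Imon)}) :=
    (Set.diff_diff_cancel_left (Set.singleton_subset_iff.mpr hyE)).symm
  change IsOpen ({(⟨⟦ey⟧, hqy⟩ : Imon)} : Set Imon)
  rw [hsing]
  exact hEopen.sdiff ((hEfin.subset Set.diff_subset).isClosed)
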